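/- There exists a₀ > 0 such that for every real a with 0 < a < a₀ and every integer m ≥ 1 satisfying the Markov condition (s₁ + 2rs₁a)^m = 1/(4r²s₂²a²), there exists a real number λ with (1 − 2ra)/(1 + 2ra) < λ < 1/(1 + 2ra) such that φ(λ) = 1, where φ(λ) = λ^m · s₁^(m−1) · s₂ · (1+2ra)^m · (λ(1+2ra) − 1) · (s₂(2λ−1)(λ s₁(1+2ra) − 1) − s₁). -/

import Mathlib

/-- The auxiliary function φ from the paper. -/
noncomputable def phi (s₁ s₂ r a : ℝ) (m : ℕ) (l : ℝ) : ℝ :=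
  l ^ m * s₁ ^ (m - 1) * s₂ * (1 + 2 * r * a) ^ m * (l * (1 + 2 * r * a) - 1) *
    (s₂ * (2 * l - 1) * (l * s₁ * (1 + 2 * r * a) - 1) - s₁)

theorem phi_eq_aux (s₁ s₂ r a : ℝ) (k : ℕ) (h1 : (0:ℝ) < 1 + 2*r*a)
    (hmul : s₁ * s₂ = s₁ + s₂) :
    phi s₁ s₂ r a (k+1) ((1 - 2*r*a)/(1+2*r*a)) =
      (1 - 2*r*a)^(k+1) * s₁^(k+1) * s₂ * (2*r*a)^2 * (s₂ + 4 - 3*s₂*(2*r*a)) / (1+2*r*a) := by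
  set ε := 2*r*a with hε
  have hne : (1:ℝ) + ε ≠ 0 := ne_of_gt h1
  set l₀ : ℝ := (1 - ε)/(1 + ε) with hl₀
  have e1 : l₀ * (1 + ε) = 1 - ε := by rw [hl₀]; field_simp
  have e2 : l₀ ^ (k+1) * (1+ε)^(k+1) = (1-ε)^(k+1) := by rw [← mul_pow, e1]
  have e3 : s₂ * (2*l₀ - 1) * (l₀ * s₁ * (1+ε) - 1) - s₁
      = s₁ * ε * (3*s₂*ε - s₂ - 4) / (1+ε) := by
    rw [hl₀]; field_simp; linear_combination (1 - 3*ε) * hmul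
  unfold phi
  simp only [Nat.add_sub_cancel]
  rw [show ∀ x y z w u v : ℝ, x*y*z*w*u*v = (x*w)*y*z*u*v from fun _ _ _ _ _ _ => by ring,
    e2, e3, e1]
  field_simp
  ring

set_option maxHeartbeats 1000000 in
theorem stmt_0 (s₁ s₂ r : ℝ) (hs₁ : 1 < s₁) (hs₂ : 1 < s₂)
    (hsum : 1 / s₁ + 1 / s₂ = 1) (hr : 0 < r) :
    ∃ a₀ > 0, ∀ a : ℝ, 0 < a → a < a₀ → ∀ m : ℕ, 1 ≤ m →
      (s₁ + 2 * r * s₁ * a) ^ m = 1 / (4 * r ^ 2 * s₂ ^ 2 * a ^ 2) →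
      ∃ l : ℝ, (1 - 2 * r * a) / (1 + 2 * r * a) < l ∧ l < 1 / (1 + 2 * r * a) ∧
        phi s₁ s₂ r a m l = 1 := by
  have hs₁0 : (0:ℝ) < s₁ := by linarith
  have hs₂0 : (0:ℝ) < s₂ := by linarith
  have hmul : s₁ * s₂ = s₁ + s₂ := by
    field_simp at hsum; linarith
  have hlogs₁ : 0 < Real.log s₁ := Real.log_pos hs₁
  set F : ℝ → ℝ := fun ε => (1 + 4*(ε*Real.log ε)/Real.log s₁)*(s₂+4-3*s₂*ε) - s₂*(1+ε)
    with hF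
  have hFc : ContinuousAt F 0 := by
    have h := Real.continuous_mul_log
    fun_prop
  have hF0 : F 0 = 4 := by norm_num [hF]
  have hFpos : ∀ᶠ ε in nhds (0:ℝ), 0 < F ε :=
    Filter.Tendsto.eventually hFc (eventually_gt_nhds (by rw [hF0]; norm_num))
  obtain ⟨δ, hδ0, hδ⟩ := Metric.eventually_nhds_iff.mp hFpos
  set c : ℝ := min δ (min (1/2) (4/(3*s₂))) with hc
  have hc0 : 0 < c := by
    apply lt_min hδ0
    apply lt_min (by norm_num)
    positivity
  refine ⟨c / (2*r), by positivity, ?_⟩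
  intro a ha0 haa m hm hM
  set ε := 2*r*a with hε
  have hε0 : 0 < ε := by positivity
  have hεc : ε < c := by
    rw [hε]
    calc 2*r*a < 2*r*(c/(2*r)) := by
          apply mul_lt_mul_of_pos_left haa (by positivity)
      _ = c := by field_simp
  have hεδ : ε < δ := lt_of_lt_of_le hεc (min_le_left _ _)
  have hεhalf : ε < 1/2 := lt_of_lt_of_le hεc (le_trans (min_le_right _ _) (min_le_left _ _))
  have hεs : ε < 4/(3*s₂) := lt_of_lt_of_le hεc (le_trans (min_le_right _ _) (min_le_right _ _))
  have h1p : (0:ℝ) < 1 + ε := by linarith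
  have h1m : (0:ℝ) < 1 - ε := by linarith
  have hC : (0:ℝ) < s₂ + 4 - 3*s₂*ε := by
    have h4 : ε * (3*s₂) < 4 := (lt_div_iff₀ (by positivity)).mp hεs
    nlinarith
  have hFε : 0 < F ε := hδ (by simp [abs_of_pos hε0, hεδ])
  have hM' : (s₁*(1+ε))^m = 1/(s₂^2*ε^2) := by
    rw [show s₁*(1+ε) = s₁ + 2*r*s₁*a by rw [hε]; ring, hM]
    congr 1
    rw [hε]; ring
  obtain ⟨k, rfl⟩ : ∃ k, m = k + 1 := ⟨m - 1, by omega⟩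
  have key : s₁^(k+1) * ((1+ε)^(k+1) * (s₂^2*ε^2)) = 1 := by
    rw [← mul_assoc, ← mul_pow, hM']
    field_simp
  have hs1pow : s₁^(k+1) = 1 / ((1+ε)^(k+1) * (s₂^2*ε^2)) :=
    eq_one_div_of_mul_eq_one_left (by linarith [key])
  set l₀ : ℝ := (1 - ε)/(1 + ε) with hl₀
  set l₁ : ℝ := 1/(1 + ε) with hl₁
  -- value of phi at the left endpoint
  have hφeq : phi s₁ s₂ r a (k+1) l₀
      = ((1-ε)/(1+ε))^(k+1) * ((s₂ + 4 - 3*s₂*ε) / (s₂*(1+ε))) := by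
    rw [hl₀]
    rw [show (1-ε)/(1+ε) = (1 - 2*r*a)/(1+2*r*a) by rw [hε]]
    rw [phi_eq_aux s₁ s₂ r a k (by rw [← hε]; exact h1p) hmul]
    rw [← hε, hs1pow, div_pow]
    have hne1 : ((1:ℝ)+ε) ≠ 0 := ne_of_gt h1p
    have hne2 : (s₂:ℝ) ≠ 0 := ne_of_gt hs₂0
    have hne3 : (ε:ℝ) ≠ 0 := ne_of_gt hε0
    have hne4 : ((1:ℝ)+ε)^(k+1) ≠ 0 := pow_ne_zero _ hne1
    field_simp
  -- bound on m
  have hmbound : ((k:ℝ)+1) * Real.log s₁ ≤ -2 * Real.log ε := by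
    have hle : s₁^(k+1) ≤ 1/ε^2 := by
      rw [hs1pow]
      apply div_le_div_of_nonneg_left (by norm_num) (by positivity)
      have h1le : (1:ℝ) ≤ (1+ε)^(k+1) := one_le_pow₀ (by linarith)
      calc ε^2 ≤ s₂^2*ε^2 := by
            nlinarith [mul_nonneg (by nlinarith : (0:ℝ) ≤ s₂^2 - 1) (sq_nonneg ε)]
        _ ≤ (1+ε)^(k+1)*(s₂^2*ε^2) := le_mul_of_one_le_left (by positivity) h1le
    have hlog := Real.log_le_log (pow_pos hs₁0 _) hle
    rw [Real.log_pow, one_div, Real.log_inv, Real.log_pow] at hlog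
    push_cast at hlog
    linarith
  -- lower bound on the ratio power
  have hpow1 : (1:ℝ) - 2*((k:ℝ)+1)*ε ≤ (1-ε)^(2*(k+1)) := by
    have h3 := one_add_mul_le_pow (a := -ε) (by linarith : (-2:ℝ) ≤ -ε) (2*(k+1))
    calc (1:ℝ) - 2*((k:ℝ)+1)*ε = 1 + (2*(k+1) : ℕ) * (-ε) := by push_cast; ring
      _ ≤ (1 + -ε)^(2*(k+1)) := h3
      _ = (1-ε)^(2*(k+1)) := by rw [← sub_eq_add_neg]
  have h2 : (1-ε)^(2*(k+1)) ≤ ((1-ε)/(1+ε))^(k+1) := by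
    have hb : (1-ε)^2 ≤ (1-ε)/(1+ε) := by
      rw [le_div_iff₀ h1p]
      nlinarith [sq_nonneg ε]
    calc (1-ε)^(2*(k+1)) = ((1-ε)^2)^(k+1) := by rw [← pow_mul]
      _ ≤ ((1-ε)/(1+ε))^(k+1) := pow_le_pow_left₀ (sq_nonneg _) hb _
  have h5 : 1 + 4*(ε*Real.log ε)/Real.log s₁ ≤ 1 - 2*((k:ℝ)+1)*ε := by
    have hkey : (((k:ℝ)+1) * Real.log s₁) * ε ≤ (-2*Real.log ε) * ε :=
      mul_le_mul_of_nonneg_right hmbound hε0.le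
    have h6 : 4*(ε*Real.log ε)/Real.log s₁ ≤ -(2*((k:ℝ)+1)*ε) := by
      rw [div_le_iff₀ hlogs₁]
      nlinarith
    linarith
  have hratio : 1 + 4*(ε*Real.log ε)/Real.log s₁ ≤ ((1-ε)/(1+ε))^(k+1) := by
    linarith
  have hφl₀ : 1 < phi s₁ s₂ r a (k+1) l₀ := by
    rw [hφeq, show ((1-ε)/(1+ε))^(k+1) * ((s₂ + 4 - 3*s₂*ε) / (s₂*(1+ε)))
        = ((1-ε)/(1+ε))^(k+1) * (s₂ + 4 - 3*s₂*ε) / (s₂*(1+ε)) by ring,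
      lt_div_iff₀ (by positivity)]
    have hstep : (1 + 4*(ε*Real.log ε)/Real.log s₁) * (s₂ + 4 - 3*s₂*ε)
        ≤ ((1-ε)/(1+ε))^(k+1) * (s₂ + 4 - 3*s₂*ε) :=
      mul_le_mul_of_nonneg_right hratio (le_of_lt hC)
    have hF' := hFε
    rw [hF] at hF'
    simp only at hF'
    linarith
  -- value at right endpoint
  have hφl₁ : phi s₁ s₂ r a (k+1) l₁ = 0 := by
    have hz : l₁ * (1 + ε) - 1 = 0 := by
      rw [hl₁]; field_simp; ring
    unfold phi
    rw [← hε, hz]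
    ring
  -- intermediate value theorem
  have hl01 : l₀ < l₁ := by
    rw [hl₀, hl₁, div_lt_div_iff₀ h1p h1p]
    nlinarith
  have hcont : ContinuousOn (fun l => phi s₁ s₂ r a (k+1) l) (Set.Icc l₀ l₁) := by
    apply Continuous.continuousOn
    unfold phi
    fun_prop
  have hmem : (1:ℝ) ∈ Set.Icc (phi s₁ s₂ r a (k+1) l₁) (phi s₁ s₂ r a (k+1) l₀) := by
    rw [hφl₁]
    exact ⟨zero_le_one, le_of_lt hφl₀⟩
  obtain ⟨l, hlmem, hfl⟩ := intermediate_value_Icc' (le_of_lt hl01) hcont hmem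
  simp only at hfl
  refine ⟨l, ?_, ?_, hfl⟩
  · refine lt_of_le_of_ne hlmem.1 (fun h => ?_)
    rw [← h] at hfl
    rw [hfl] at hφl₀
    exact lt_irrefl 1 hφl₀
  · refine lt_of_le_of_ne hlmem.2 (fun h => ?_)
    rw [h] at hfl
    rw [hfl] at hφl₁
    norm_num at hφl₁
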